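/- Let φ be proper closed convex with dom φ of diameter at most D, x_c ∈ dom φ, μ, λ > 0, and φ̂ = φ + (μ/2)‖· - x_c‖². Then for any x ∈ dom φ, ‖∇φ_{1/(λ+μ)}((μ/(μ+λ)) x_c + (λ/(μ+λ)) x)‖ ≤ ((λ+μ)/λ)‖∇φ̂_{1/λ}(x)‖ + μD. -/

import Mathlib

open InnerProductSpace

/-- `x ↦ x + c` is an order isomorphism of `EReal` for real `c`. -/
noncomputable def erealAddRealIso (c : ℝ) : EReal ≃o EReal where
  toFun a := a + (c : EReal)
  invFun a := a - (c : EReal)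
  left_inv _ := EReal.add_sub_cancel_right
  right_inv _ := EReal.sub_add_cancel
  map_rel_iff' := (EReal.addLECancellable_coe c).add_le_add_iff_right

lemma ereal_iInf_add_real {α : Type*} (f : α → EReal) (c : ℝ) :
    (⨅ y, f y + (c : EReal)) = (⨅ y, f y) + (c : EReal) :=
  ((erealAddRealIso c).map_iInf f).symm

lemma quad_split {d : ℕ} (μ lam : ℝ) (hμ : 0 < μ) (hlam : 0 < lam)
    (u v : EuclideanSpace ℝ (Fin d)) :
    μ / 2 * ‖u‖ ^ 2 + lam / 2 * ‖v‖ ^ 2 =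
      (lam + μ) / 2 * ‖(μ / (μ + lam)) • u + (lam / (μ + lam)) • v‖ ^ 2 +
        (lam * μ / (lam + μ)) / 2 * ‖u - v‖ ^ 2 := by
  have h1 := norm_add_sq_real ((μ / (μ + lam)) • u) ((lam / (μ + lam)) • v)
  have h2 := norm_sub_sq_real u v
  have ha : ‖μ / (μ + lam)‖ = μ / (μ + lam) := by
    rw [Real.norm_eq_abs, abs_of_pos]; positivity
  have hb : ‖lam / (μ + lam)‖ = lam / (μ + lam) := by
    rw [Real.norm_eq_abs, abs_of_pos]; positivity
  rw [norm_smul, norm_smul, real_inner_smul_left, real_inner_smul_right, ha, hb] at h1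
  rw [h1, h2]
  have hne : μ + lam ≠ 0 := by positivity
  have hne' : lam + μ ≠ 0 := by positivity
  field_simp
  ring

/-- Gradient bound (2.6): for proper closed convex `φ` with `diam(dom φ) ≤ D`,
`φ̂ = φ + (μ/2)‖· - x_c‖²`, and `x ∈ dom φ`:
`‖∇φ_{1/(λ+μ)}((μ/(μ+λ))x_c + (λ/(μ+λ))x)‖ ≤ ((λ+μ)/λ)‖∇φ̂_{1/λ}(x)‖ + μD`. -/
theorem regularized_envelope_gradient_bound {d : ℕ}
    (φ : EuclideanSpace ℝ (Fin d) → EReal) (μ lam D : ℝ)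
    (hμ : 0 < μ) (hlam : 0 < lam) (hD : 0 ≤ D)
    (hproper : ∃ x, φ x ≠ ⊤) (hnbot : ∀ x, φ x ≠ ⊥)
    (hclosed : LowerSemicontinuous φ)
    (hconv : ∀ x y : EuclideanSpace ℝ (Fin d), ∀ a b : ℝ, 0 ≤ a → 0 ≤ b → a + b = 1 →
      φ (a • x + b • y) ≤ (a : EReal) * φ x + (b : EReal) * φ y)
    (hdiam : ∀ u v, φ u ≠ ⊤ → φ v ≠ ⊤ → ‖u - v‖ ≤ D)
    (xc : EuclideanSpace ℝ (Fin d)) (hxc : φ xc ≠ ⊤)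
    -- env₁ = φ_{1/(λ+μ)} and env₂ = φ̂_{1/λ}, with gradient maps G₁, G₂:
    (env₁ env₂ : EuclideanSpace ℝ (Fin d) → ℝ)
    (henv₁ : ∀ w, (env₁ w : EReal) = ⨅ y, φ y + (((lam + μ) / 2 * ‖y - w‖ ^ 2 : ℝ) : EReal))
    (henv₂ : ∀ w, (env₂ w : EReal) =
      ⨅ y, φ y + ((μ / 2 * ‖y - xc‖ ^ 2 + lam / 2 * ‖y - w‖ ^ 2 : ℝ) : EReal))
    (G₁ G₂ : EuclideanSpace ℝ (Fin d) → EuclideanSpace ℝ (Fin d))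
    (hG₁ : ∀ w, HasGradientAt env₁ (G₁ w) w)
    (hG₂ : ∀ w, HasGradientAt env₂ (G₂ w) w)
    (x : EuclideanSpace ℝ (Fin d)) (hx : φ x ≠ ⊤) :
    ‖G₁ ((μ / (μ + lam)) • xc + (lam / (μ + lam)) • x)‖ ≤
      (lam + μ) / lam * ‖G₂ x‖ + μ * D := by
  classical
  have hμlam : (0:ℝ) < μ + lam := by linarith
  set t : ℝ := μ / (μ + lam) with ht
  set s : ℝ := lam / (μ + lam) with hs
  set k : ℝ := lam * μ / (lam + μ) with hk
  have hsp : 0 < s := by positivity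
  have hsne : s ≠ 0 := ne_of_gt hsp
  set z : EuclideanSpace ℝ (Fin d) → EuclideanSpace ℝ (Fin d) := fun w => t • xc + s • w with hz
  -- the decomposition `y - z w = t • (y - xc) + s • (y - w)`
  have hts : t + s = 1 := by rw [ht, hs]; field_simp
  have hzdiff : ∀ y w : EuclideanSpace ℝ (Fin d), y - z w = t • (y - xc) + s • (y - w) := by
    intro y w
    have hy : t • y + s • y = y := by rw [← add_smul, hts, one_smul]
    calc y - z w = (t • y + s • y) - (t • xc + s • w) := by rw [hy]
      _ = t • (y - xc) + s • (y - w) := by rw [smul_sub, smul_sub]; abel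
  -- Step B: envelope identity
  have envEq : ∀ w, env₂ w = env₁ (z w) + k / 2 * ‖w - xc‖ ^ 2 := by
    intro w
    have key : ∀ y : EuclideanSpace ℝ (Fin d), (μ / 2 * ‖y - xc‖ ^ 2 + lam / 2 * ‖y - w‖ ^ 2 : ℝ)
        = (lam + μ) / 2 * ‖y - z w‖ ^ 2 + k / 2 * ‖w - xc‖ ^ 2 := by
      intro y
      have huv : w - xc = (y - xc) - (y - w) := by abel
      rw [hzdiff y w, huv]
      exact quad_split μ lam hμ hlam (y - xc) (y - w)
    have hE : (env₂ w : EReal)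
        = ((env₁ (z w) : ℝ) : EReal) + ((k / 2 * ‖w - xc‖ ^ 2 : ℝ) : EReal) := by
      rw [henv₂ w]
      have hpt : ∀ y : EuclideanSpace ℝ (Fin d), φ y + ((μ / 2 * ‖y - xc‖ ^ 2 + lam / 2 * ‖y - w‖ ^ 2 : ℝ) : EReal)
          = (φ y + (((lam + μ) / 2 * ‖y - z w‖ ^ 2 : ℝ) : EReal))
            + ((k / 2 * ‖w - xc‖ ^ 2 : ℝ) : EReal) := by
        intro y
        rw [key y]
        push_cast
        rw [add_assoc]
      simp_rw [hpt]
      rw [ereal_iInf_add_real (fun y => φ y + (((lam + μ) / 2 * ‖y - z w‖ ^ 2 : ℝ) : EReal)),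
        ← henv₁ (z w)]
    have hE' : (env₂ w : EReal) = ((env₁ (z w) + k / 2 * ‖w - xc‖ ^ 2 : ℝ) : EReal) := by
      rw [hE]; push_cast; ring
    exact_mod_cast hE'
  -- Step C: differentiate
  have hzf : HasFDerivAt z (s • ContinuousLinearMap.id ℝ (EuclideanSpace ℝ (Fin d))) x :=
    ((hasFDerivAt_id x).const_smul s).const_add (t • xc)
  have hcomp : HasFDerivAt (fun w => env₁ (z w))
      ((toDual ℝ (EuclideanSpace ℝ (Fin d)) (G₁ (z x))).comp (s • ContinuousLinearMap.id ℝ (EuclideanSpace ℝ (Fin d)))) x :=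
    ((hG₁ (z x)).hasFDerivAt).comp x hzf
  have hq0 : HasFDerivAt (fun w : EuclideanSpace ℝ (Fin d) => w - xc) (ContinuousLinearMap.id ℝ (EuclideanSpace ℝ (Fin d))) x :=
    (hasFDerivAt_id x).sub_const xc
  have hq1 := (hq0.inner ℝ hq0).const_mul (k / 2)
  have hq2 : HasFDerivAt (fun w : EuclideanSpace ℝ (Fin d) => k / 2 * ‖w - xc‖ ^ 2)
      ((k / 2) • ((fderivInnerCLM ℝ (x - xc, x - xc)).comp
        ((ContinuousLinearMap.id ℝ (EuclideanSpace ℝ (Fin d))).prod (ContinuousLinearMap.id ℝ (EuclideanSpace ℝ (Fin d)))))) x := by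
    simpa only [real_inner_self_eq_norm_sq] using hq1
  have hsum := hcomp.add hq2
  have hL : (toDual ℝ (EuclideanSpace ℝ (Fin d)) (G₁ (z x))).comp (s • ContinuousLinearMap.id ℝ (EuclideanSpace ℝ (Fin d)))
      + (k / 2) • ((fderivInnerCLM ℝ (x - xc, x - xc)).comp
        ((ContinuousLinearMap.id ℝ (EuclideanSpace ℝ (Fin d))).prod (ContinuousLinearMap.id ℝ (EuclideanSpace ℝ (Fin d)))))
      = toDual ℝ (EuclideanSpace ℝ (Fin d)) (s • G₁ (z x) + k • (x - xc)) := by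
    ext v
    simp only [ContinuousLinearMap.add_apply, ContinuousLinearMap.coe_comp', Function.comp_apply,
      ContinuousLinearMap.smul_apply, ContinuousLinearMap.coe_id', id_eq,
      ContinuousLinearMap.prod_apply, fderivInnerCLM_apply, toDual_apply_apply,
      inner_add_left, real_inner_smul_left, map_smul, smul_eq_mul]
    rw [real_inner_comm v (x - xc)]
    ring
  have henvfun : env₂ = fun w => env₁ (z w) + k / 2 * ‖w - xc‖ ^ 2 := funext envEq
  have hgrad : HasGradientAt env₂ (s • G₁ (z x) + k • (x - xc)) x := by
    rw [henvfun, hasGradientAt_iff_hasFDerivAt, ← hL]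
    exact hsum
  have heq : G₂ x = s • G₁ (z x) + k • (x - xc) := (hG₂ x).unique hgrad
  -- Step D: solve and bound
  have h1 : s • G₁ (z x) = G₂ x - k • (x - xc) := by rw [heq]; abel
  have h2 : G₁ (z x) = s⁻¹ • G₂ x - (s⁻¹ * k) • (x - xc) := by
    have h3 : s⁻¹ • (s • G₁ (z x)) = s⁻¹ • (G₂ x - k • (x - xc)) := by rw [h1]
    rw [smul_smul, inv_mul_cancel₀ hsne, one_smul, smul_sub, smul_smul] at h3
    exact h3
  have hsinv : s⁻¹ = (lam + μ) / lam := by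
    rw [hs]; field_simp; ring
  have hsk : s⁻¹ * k = μ := by
    rw [hsinv, hk]; field_simp
  have hgoal : G₁ (z x) = ((lam + μ) / lam) • G₂ x - μ • (x - xc) := by
    rw [h2, hsk, hsinv]
  rw [show ((μ / (μ + lam)) • xc + (lam / (μ + lam)) • x : EuclideanSpace ℝ (Fin d)) = z x
    from rfl, hgoal]
  have hdx : ‖x - xc‖ ≤ D := hdiam x xc hx hxc
  calc ‖((lam + μ) / lam) • G₂ x - μ • (x - xc)‖
      ≤ ‖((lam + μ) / lam) • G₂ x‖ + ‖μ • (x - xc)‖ := norm_sub_le _ _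
    _ = (lam + μ) / lam * ‖G₂ x‖ + μ * ‖x - xc‖ := by
        rw [norm_smul, norm_smul, Real.norm_eq_abs, Real.norm_eq_abs,
          abs_of_pos (by positivity), abs_of_pos hμ]
    _ ≤ (lam + μ) / lam * ‖G₂ x‖ + μ * D := by
        have : μ * ‖x - xc‖ ≤ μ * D := by
          exact mul_le_mul_of_nonneg_left hdx (le_of_lt hμ)
        linarith
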